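/- Let n ≥ 1 and let A be a real n×n matrix satisfying the cyclic non-increasing condition such that Ae < 0 (all row sums strictly negative). Then (i) every vector z ∈ ℝⁿ with Az = 0 satisfies eᵀz = 0, and (ii) the system Aᵀx = e has a solution x with x ≤ 0 componentwise. -/

import Mathlib

open Matrix BigOperators Filter Topology

/-- The cyclic non-increasing condition: each row of `A` weakly decreases
cyclically starting from the diagonal, i.e. `a_{i[j-1]} ≥ a_{ij}` for all
`j ≠ i` (indices in `Fin n`, arithmetic mod `n`). -/
def CyclicNonIncr {n : ℕ} [NeZero n] (A : Matrix (Fin n) (Fin n) ℝ) : Prop :=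
  ∀ i j : Fin n, j ≠ i → A i (j - 1) ≥ A i j

/-- The directed graph `𝒢(A)` has an edge from `i` to `j` iff `a_{i[j-1]} > a_{ij}`. -/
def GraphEdge {n : ℕ} [NeZero n] (A : Matrix (Fin n) (Fin n) ℝ) (i j : Fin n) : Prop :=
  A i (j - 1) > A i j

/-- `i` and `j` are strongly connected in `𝒢(A)`: there are directed paths
(possibly of length 0) from `i` to `j` and from `j` to `i`. -/
def Conn {n : ℕ} [NeZero n] (A : Matrix (Fin n) (Fin n) ℝ) (i j : Fin n) : Prop :=
  Relation.ReflTransGen (GraphEdge A) i j ∧ Relation.ReflTransGen (GraphEdge A) j i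

/-- `C` is a strongly connected component of `𝒢(A)`: an equivalence class of
the strong-connectivity relation. -/
def IsSCC {n : ℕ} [NeZero n] (A : Matrix (Fin n) (Fin n) ℝ) (C : Set (Fin n)) : Prop :=
  ∃ i, C = {j | Conn A i j}

/-- `C` is a closed SCC of `𝒢(A)`: an SCC with no edge leaving it. -/
def IsClosedSCC {n : ℕ} [NeZero n] (A : Matrix (Fin n) (Fin n) ℝ) (C : Set (Fin n)) : Prop :=
  IsSCC A C ∧ ∀ i ∈ C, ∀ j, GraphEdge A i j → j ∈ C

/-- `C` is an open SCC of `𝒢(A)`: an SCC with some edge leaving it. -/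
def IsOpenSCC {n : ℕ} [NeZero n] (A : Matrix (Fin n) (Fin n) ℝ) (C : Set (Fin n)) : Prop :=
  IsSCC A C ∧ ¬ (∀ i ∈ C, ∀ j, GraphEdge A i j → j ∈ C)


lemma exists_fixed_simplex {n : ℕ} [NeZero n] (K : Matrix (Fin n) (Fin n) ℝ)
    (hK0 : ∀ i j, 0 ≤ K i j) (hK1 : ∀ i, ∑ j, K i j = 1) :
    ∃ y : Fin n → ℝ, (∀ i, 0 ≤ y i) ∧ (∑ i, y i = 1) ∧ Matrix.vecMul y K = y := by
  classical
  set S : Set (Fin n → ℝ) := {y | (∀ i, 0 ≤ y i) ∧ ∑ i, y i = 1} with hSdef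
  set T : (Fin n → ℝ) →ₗ[ℝ] (Fin n → ℝ) := Matrix.vecMulLinear K with hTdef
  have hTapp : ∀ y : Fin n → ℝ, ∀ j, T y j = ∑ i, y i * K i j := by
    intro y j
    simp [hTdef, Matrix.vecMulLinear, Matrix.vecMul, dotProduct]
  have hTS : ∀ y ∈ S, T y ∈ S := by
    intro y hy
    refine ⟨fun j => ?_, ?_⟩
    · rw [hTapp]
      exact Finset.sum_nonneg fun i _ => mul_nonneg (hy.1 i) (hK0 i j)
    · have : ∑ j, T y j = ∑ i, y i * ∑ j, K i j := by
        simp only [hTapp, Finset.mul_sum]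
        exact Finset.sum_comm
      simp only [this, hK1, mul_one, hy.2]
  have hnpos : (0:ℝ) < n := by
    exact_mod_cast Nat.pos_of_ne_zero (NeZero.ne n)
  set y0 : Fin n → ℝ := fun _ => (n : ℝ)⁻¹ with hy0def
  have hy0 : y0 ∈ S := by
    constructor
    · intro i; positivity
    · simp only [hy0def, Finset.sum_const, Finset.card_univ, Fintype.card_fin, nsmul_eq_mul]
      field_simp
  set u : ℕ → (Fin n → ℝ) := fun k => (⇑T)^[k] y0 with hudef
  have hu : ∀ k, u k ∈ S := by
    intro k; induction k with
    | zero => exact hy0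
    | succ k ih =>
      have h : u (k+1) = T (u k) := Function.iterate_succ_apply' _ _ _
      rw [h]; exact hTS _ ih
  have huS : ∀ k, T (u k) = u (k+1) :=
    fun k => (Function.iterate_succ_apply' (⇑T) k y0).symm
  set a : ℕ → (Fin n → ℝ) := fun N => ((N:ℝ)+1)⁻¹ • ∑ k ∈ Finset.range (N+1), u k with hadef
  have haS : ∀ N, a N ∈ S := by
    intro N
    have hNpos : (0:ℝ) < (N:ℝ)+1 := by positivity
    constructor
    · intro i
      simp only [hadef, Pi.smul_apply, Finset.sum_apply, smul_eq_mul]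
      exact mul_nonneg (by positivity) (Finset.sum_nonneg fun k _ => (hu k).1 i)
    · simp only [hadef, Pi.smul_apply, Finset.sum_apply, smul_eq_mul]
      rw [← Finset.mul_sum, Finset.sum_comm]
      have : ∀ k ∈ Finset.range (N+1), ∑ i, u k i = 1 := fun k _ => (hu k).2
      rw [Finset.sum_congr rfl this]
      simp only [Finset.sum_const, Finset.card_range, nsmul_eq_mul, mul_one]
      have hNpos' : ((N:ℝ)+1) ≠ 0 := by positivity
      field_simp
      norm_num
  -- key identity
  have hkey : ∀ N, T (a N) - a N = ((N:ℝ)+1)⁻¹ • (u (N+1) - u 0) := by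
    intro N
    have h1 : T (a N) = ((N:ℝ)+1)⁻¹ • ∑ k ∈ Finset.range (N+1), u (k+1) := by
      have h0 : a N = ((N:ℝ)+1)⁻¹ • ∑ k ∈ Finset.range (N+1), u k := rfl
      rw [h0, _root_.map_smul, map_sum]
      congr 1
      exact Finset.sum_congr rfl fun k _ => huS k
    have h2 : ∑ k ∈ Finset.range (N+1), u (k+1)
        = ∑ k ∈ Finset.range (N+1), u k + (u (N+1) - u 0) := by
      have := Finset.sum_range_succ (fun k => u k) (N+1)
      have h3 := Finset.sum_range_succ' (fun k => u k) (N+1)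
      -- sum_range_succ' : ∑ k in range (n+1), f k = (∑ k in range n, f (k+1)) + f 0
      rw [this] at h3
      -- h3 : ∑ range (N+1) u + u (N+1) = ∑ k in range (N+1), u (k+1) + u 0
      linear_combination (norm := abel) - h3
    have h0 : a N = ((N:ℝ)+1)⁻¹ • ∑ k ∈ Finset.range (N+1), u k := rfl
    rw [h1, h2, smul_add, h0]
    abel
  -- norm bounds
  have hnormS : ∀ y ∈ S, ‖y‖ ≤ 1 := by
    intro y hy
    rw [pi_norm_le_iff_of_nonneg zero_le_one]
    intro i
    rw [Real.norm_eq_abs, abs_of_nonneg (hy.1 i)]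
    calc y i = ∑ j ∈ {i}, y j := by simp
    _ ≤ ∑ j, y j := Finset.sum_le_sum_of_subset_of_nonneg (Finset.subset_univ _)
        (fun j _ _ => hy.1 j)
    _ = 1 := hy.2
  have hdiff : Tendsto (fun N => T (a N) - a N) atTop (𝓝 0) := by
    apply squeeze_zero_norm (a := fun N : ℕ => 2 / ((N:ℝ)+1))
    · intro N
      rw [hkey N, norm_smul]
      have : ‖u (N+1) - u 0‖ ≤ 2 := by
        calc ‖u (N+1) - u 0‖ ≤ ‖u (N+1)‖ + ‖u 0‖ := norm_sub_le _ _
        _ ≤ 1 + 1 := add_le_add (hnormS _ (hu _)) (hnormS _ (hu _))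
        _ = 2 := by norm_num
      have hNpos : (0:ℝ) < (N:ℝ)+1 := by positivity
      rw [Real.norm_eq_abs, abs_of_pos (by positivity : (0:ℝ) < ((N:ℝ)+1)⁻¹)]
      rw [div_eq_inv_mul]
      exact mul_le_mul_of_nonneg_left this (by positivity)
    · have := tendsto_one_div_add_atTop_nhds_zero_nat (𝕜 := ℝ)
      have h2 : Tendsto (fun n : ℕ => 2 * (1 / ((n:ℝ)+1))) atTop (𝓝 (2 * 0)) :=
        this.const_mul 2
      simpa [mul_one_div, div_eq_mul_inv] using h2
  -- compactness
  have hScomp : IsCompact S := by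
    apply IsCompact.of_isClosed_subset
      (isCompact_univ_pi (fun _ : Fin n => isCompact_Icc (a := (0:ℝ)) (b := 1)))
    · have hrepr : S = (⋂ i, {y : Fin n → ℝ | 0 ≤ y i}) ∩ {y | ∑ i, y i = 1} := by
        ext y; simp [hSdef, Set.mem_iInter]
      rw [hrepr]
      exact (isClosed_iInter fun i =>
        isClosed_le continuous_const (continuous_apply i)).inter
        (isClosed_eq (continuous_finset_sum _ fun i _ => continuous_apply i)
          continuous_const)
    · intro y hy
      rw [Set.mem_univ_pi]
      intro i
      refine ⟨hy.1 i, ?_⟩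
      calc y i = ∑ j ∈ {i}, y j := by simp
      _ ≤ ∑ j, y j := Finset.sum_le_sum_of_subset_of_nonneg (Finset.subset_univ _)
          (fun j _ _ => hy.1 j)
      _ = 1 := hy.2
  obtain ⟨y, hyS, φ, hφ, hconv⟩ := hScomp.tendsto_subseq haS
  have hTcont : Continuous T := T.continuous_of_finiteDimensional
  have hfix : T y = y := by
    have h1 : Tendsto (fun k => T (a (φ k))) atTop (𝓝 (T y)) :=
      (hTcont.tendsto y).comp hconv
    have h2 : Tendsto (fun k => T (a (φ k)) - a (φ k)) atTop (𝓝 0) :=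
      hdiff.comp (hφ.tendsto_atTop)
    have h3 : Tendsto (fun k => T (a (φ k))) atTop (𝓝 (0 + y)) := by
      have := h2.add hconv
      simpa using this
    rw [zero_add] at h3
    exact tendsto_nhds_unique h1 h3
  refine ⟨y, hyS.1, hyS.2, ?_⟩
  have : T y = Matrix.vecMul y K := by
    simp [hTdef, Matrix.vecMulLinear_apply]
  rw [← this, hfix]

theorem stmt_6 (n : ℕ) [NeZero n] (hn : 1 ≤ n) (A : Matrix (Fin n) (Fin n) ℝ)
    (hA : CyclicNonIncr A)
    (hrow : ∀ i, A.mulVec (fun _ => (1 : ℝ)) i < 0) :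
    (∀ z : Fin n → ℝ, A.mulVec z = 0 → ∑ i, z i = 0) ∧
    ∃ x : Fin n → ℝ, x ≤ 0 ∧ Aᵀ.mulVec x = fun _ => (1 : ℝ) := by
  classical
  have hrow' : ∀ i, ∑ j, A i j < 0 := by
    intro i
    have := hrow i
    simpa [Matrix.mulVec, dotProduct] using this
  -- the Laplacian-like matrix
  set M : Matrix (Fin n) (Fin n) ℝ := fun i j => A i (j - 1) - A i j with hMdef
  have hMoff : ∀ i j, j ≠ i → 0 ≤ M i j := fun i j h => sub_nonneg.2 (hA i j h)
  have hMrow : ∀ i, ∑ j, M i j = 0 := by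
    intro i
    have h1 : ∑ j, A i (j - 1) = ∑ j, A i j :=
      Equiv.sum_comp (Equiv.subRight (1 : Fin n)) (fun j => A i j)
    simp only [hMdef, Finset.sum_sub_distrib]
    rw [h1, sub_self]
  -- choose t
  set c0 : ℝ := 1 + ∑ i, |M i i| with hc0def
  have hc0pos : 0 < c0 := by
    have : 0 ≤ ∑ i, |M i i| := Finset.sum_nonneg fun i _ => abs_nonneg _
    linarith
  set t : ℝ := c0⁻¹ with htdef
  have htpos : 0 < t := inv_pos.2 hc0pos
  set K : Matrix (Fin n) (Fin n) ℝ :=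
    fun i j => (if i = j then (1:ℝ) else 0) + t * M i j with hKdef
  have hK0 : ∀ i j, 0 ≤ K i j := by
    intro i j
    by_cases h : i = j
    · subst h
      simp only [hKdef, if_pos rfl]
      have h1 : |M i i| ≤ c0 := by
        have : |M i i| ≤ ∑ k, |M k k| := Finset.single_le_sum
          (fun k _ => abs_nonneg (M k k)) (Finset.mem_univ i)
        linarith
      have h2 : t * |M i i| ≤ 1 := by
        calc t * |M i i| ≤ t * c0 := by
              exact mul_le_mul_of_nonneg_left h1 htpos.le
        _ = 1 := inv_mul_cancel₀ hc0pos.ne'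
      have h3 : t * (-|M i i|) ≤ t * M i i :=
        mul_le_mul_of_nonneg_left (neg_abs_le _) htpos.le
      simp only [if_true]
      nlinarith
    · simp only [hKdef, if_neg h, zero_add]
      exact mul_nonneg htpos.le (hMoff i j (fun hj => h hj.symm))
  have hK1 : ∀ i, ∑ j, K i j = 1 := by
    intro i
    simp only [hKdef]
    rw [Finset.sum_add_distrib, ← Finset.mul_sum, hMrow, mul_zero, add_zero]
    simp
  obtain ⟨y, hy0, hy1, hyK⟩ := exists_fixed_simplex K hK0 hK1
  -- deduce vecMul y M = 0
  have hyM : ∀ j, ∑ i, y i * M i j = 0 := by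
    intro j
    have h := congrFun hyK j
    simp only [Matrix.vecMul, dotProduct, hKdef] at h
    have h2 : ∑ i, y i * ((if i = j then (1:ℝ) else 0) + t * M i j)
        = y j + t * ∑ i, y i * M i j := by
      rw [Finset.sum_congr rfl (fun i _ => mul_add (y i) _ _), Finset.sum_add_distrib]
      congr 1
      · simp [Finset.sum_ite_eq', mul_comm]
      · rw [Finset.mul_sum]
        exact Finset.sum_congr rfl fun i _ => by ring
    rw [h2] at h
    have h3 : t * ∑ i, y i * M i j = 0 := by linarith
    exact (mul_eq_zero.1 h3).resolve_left htpos.ne'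
  -- v is constant
  set v : Fin n → ℝ := fun j => ∑ i, y i * A i j with hvdef
  have hvstep : ∀ j, v (j - 1) = v j := by
    intro j
    have := hyM j
    simp only [hMdef, mul_sub, Finset.sum_sub_distrib] at this
    have : (∑ i, y i * A i (j-1)) = ∑ i, y i * A i j := by linarith
    simpa [hvdef] using this
  have hvsucc : ∀ j, v (j + 1) = v j := by
    intro j
    have := hvstep (j + 1)
    simpa using this.symm
  have hvconst : ∀ j, v j = v 0 := by
    open Fin.NatCast in
    have hnat : ∀ m : ℕ, v (m : Fin n) = v 0 := by
      intro m
      induction m with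
      | zero => simp
      | succ m ih =>
        have : ((m+1 : ℕ) : Fin n) = (m : Fin n) + 1 := by push_cast; ring
        rw [this, hvsucc, ih]
    intro j
    have := hnat (j : ℕ)
    rwa [Fin.cast_val_eq_self] at this
  -- v 0 < 0
  have hnpos : (0:ℝ) < n := by exact_mod_cast Nat.pos_of_ne_zero (NeZero.ne n)
  have hsumv : ∑ j, v j = ∑ i, y i * ∑ j, A i j := by
    simp only [hvdef, Finset.mul_sum]
    exact Finset.sum_comm
  have hv0neg : v 0 < 0 := by
    have hlt : ∑ i, y i * ∑ j, A i j < 0 := by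
      obtain ⟨i0, hi0⟩ : ∃ i0, 0 < y i0 := by
        by_contra h
        push_neg at h
        have : ∑ i, y i = 0 := Finset.sum_eq_zero fun i _ => le_antisymm (h i) (hy0 i)
        rw [hy1] at this; norm_num at this
      have := Finset.sum_lt_sum (f := fun i => y i * ∑ j, A i j) (g := fun _ => (0:ℝ))
        (fun i _ => mul_nonpos_of_nonneg_of_nonpos (hy0 i) (hrow' i).le)
        ⟨i0, Finset.mem_univ i0, mul_neg_of_pos_of_neg hi0 (hrow' i0)⟩
      simpa using this
    have heq : ∑ j, v j = (n : ℝ) * v 0 := by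
      rw [Finset.sum_congr rfl fun j _ => hvconst j]
      simp [Finset.sum_const, mul_comm]
    have hkey : (n : ℝ) * v 0 < 0 := by rw [← heq, hsumv]; exact hlt
    nlinarith
  -- build x
  set x : Fin n → ℝ := fun i => y i / v 0 with hxdef
  have hx0 : x ≤ 0 := by
    intro i
    exact div_nonpos_of_nonneg_of_nonpos (hy0 i) hv0neg.le
  have hxA : Aᵀ.mulVec x = fun _ => (1:ℝ) := by
    funext j
    simp only [Matrix.mulVec, dotProduct, Matrix.transpose_apply, hxdef]
    have : ∑ i, A i j * (y i / v 0) = (∑ i, y i * A i j) / v 0 := by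
      rw [Finset.sum_div]
      exact Finset.sum_congr rfl fun i _ => by ring
    rw [this]
    have : (∑ i, y i * A i j) = v 0 := (hvconst j) ▸ rfl
    rw [this, div_self hv0neg.ne]
  refine ⟨?_, x, hx0, hxA⟩
  intro z hz
  have h1 : ∀ j, ∑ i, A i j * x i = 1 := by
    intro j
    have := congrFun hxA j
    simpa [Matrix.mulVec, dotProduct, Matrix.transpose_apply] using this
  have h2 : ∀ i, ∑ j, A i j * z j = 0 := by
    intro i
    have := congrFun hz i
    simpa [Matrix.mulVec, dotProduct] using this
  calc ∑ j, z j = ∑ j, ∑ i, A i j * x i * z j := by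
        refine Finset.sum_congr rfl fun j _ => ?_
        rw [← Finset.sum_mul, h1 j, one_mul]
  _ = ∑ i, ∑ j, A i j * x i * z j := Finset.sum_comm
  _ = ∑ i, x i * ∑ j, A i j * z j := by
        refine Finset.sum_congr rfl fun i _ => ?_
        rw [Finset.mul_sum]
        exact Finset.sum_congr rfl fun j _ => by ring
  _ = 0 := by simp [h2]
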